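/- In the compact indifference model with men having strict (certain) preferences, let μ be a matching and for a woman w let k(w) be the number of men m ≠ μ(w) such that w ≻_m μ(m) and w is indifferent between m and μ(w) (m lies in the same tie as μ(w) in w's weak order). If no man m with w ≻_m μ(m) is strictly preferred by w to μ(w), then the probability that w is involved in no blocking pair equals 1/(k(w)+1), and the stability probability of μ equals the product over all women w of 1/(k(w)+1). -/

import Mathlib

open Finset
open scoped Classical BigOperators

/-- A strict preference order over `Fin n`, encoded as a rank bijection:
`P a < P b` means the agent prefers `a` to `b`. -/
abbrev Pref (n : ℕ) := Equiv.Perm (Fin n)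

/-- The pair `(m, w)` blocks the matching `μ` under profile `(PM, PW)`. -/
def blocks {n : ℕ} (μ : Equiv.Perm (Fin n)) (PM PW : Fin n → Pref n) (m w : Fin n) : Prop :=
  μ m ≠ w ∧ PM m w < PM m (μ m) ∧ PW w m < PW w (μ.symm w)

/-- `μ` is stable under the profile `(PM, PW)`. -/
def stable {n : ℕ} (μ : Equiv.Perm (Fin n)) (PM PW : Fin n → Pref n) : Prop :=
  ∀ m w, ¬ blocks μ PM PW m w

/-- `p` is a probability distribution over preference orders. -/
def isDist {n : ℕ} (p : Pref n → ℝ) : Prop := (∀ P, 0 ≤ p P) ∧ ∑ P, p P = 1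

/-- Stability probability of `μ` in the independent (lottery-style) model where each
man `i` draws from `pM i` and each woman `i` draws from `pW i`, independently. -/
noncomputable def stabProb {n : ℕ} (pM pW : Fin n → Pref n → ℝ) (μ : Equiv.Perm (Fin n)) : ℝ :=
  ∑ PM : Fin n → Pref n, ∑ PW : Fin n → Pref n,
    if stable μ PM PW then (∏ i, pM i (PM i)) * (∏ i, pW i (PW i)) else 0

/-- Agent with distribution `p` certainly prefers `a` to `b` (prefers with probability 1). -/
def certPrefers {n : ℕ} (p : Pref n → ℝ) (a b : Fin n) : Prop :=
  ∑ P ∈ Finset.univ.filter (fun P : Pref n => P a < P b), p P = 1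

/-- Stability probability when the men's preferences `PM` are certain and each woman `i`
independently draws her order from the distribution `pW i`. -/
noncomputable def stabProbW {n : ℕ} (PM : Fin n → Pref n) (pW : Fin n → Pref n → ℝ)
    (μ : Equiv.Perm (Fin n)) : ℝ :=
  ∑ PW : Fin n → Pref n, if stable μ PM PW then ∏ i, pW i (PW i) else 0

/-- `P` is a linear extension of the weak order with tie-classes given by rank `r`
(smaller `r`-value means strictly preferred; equal `r`-values form a tie). -/
def IsExt {n : ℕ} (r : Fin n → ℕ) (P : Pref n) : Prop := ∀ a b, r a < r b → P a < P b

/-- The uniform distribution over the linear extensions of the weak order `r`. -/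
noncomputable def unifExt {n : ℕ} (r : Fin n → ℕ) : Pref n → ℝ := fun P =>
  if IsExt r P then ((Finset.univ.filter fun Q : Pref n => IsExt r Q).card : ℝ)⁻¹ else 0

lemma ext_exists {n : ℕ} (r : Fin n → ℕ) : ∃ P : Pref n, IsExt r P := by
  classical
  set f : Fin n → ℕ := fun i => n * r i + i with hfdef
  have hf : ∀ a b : Fin n, r a < r b → f a < f b := by
    intro a b hab
    have h1 : (a : ℕ) < n := a.isLt
    have h2 : n * (r a + 1) ≤ n * r b := Nat.mul_le_mul_left n hab
    have : n * r a + n = n * (r a + 1) := by ring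
    simp only [hfdef]
    omega
  refine ⟨(Tuple.sort f)⁻¹, ?_⟩
  intro a b hab
  by_contra h
  have h' : (Tuple.sort f)⁻¹ b ≤ (Tuple.sort f)⁻¹ a := le_of_not_gt h
  have hm := Tuple.monotone_sort f h'
  simp only [Function.comp_apply, Equiv.Perm.inv_def, Equiv.apply_symm_apply] at hm
  exact absurd hm (not_le.mpr (hf a b hab))

/-- the "min at s among S" extension set -/
noncomputable def gset {n : ℕ} (r : Fin n → ℕ) (S : Finset (Fin n)) (s : Fin n) :
    Finset (Pref n) :=
  Finset.univ.filter fun P => IsExt r P ∧ ∀ t ∈ S, t ≠ s → P s < P t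

lemma gset_map {n : ℕ} (r : Fin n → ℕ) (S : Finset (Fin n)) (s t : Fin n)
    (hs : s ∈ S) (ht : t ∈ S) (hr : r s = r t) {P : Pref n} (hP : P ∈ gset r S s) :
    (Equiv.swap s t).trans P ∈ gset r S t := by
  classical
  simp only [gset, mem_filter, mem_univ, true_and] at hP ⊢
  obtain ⟨hext, hmin⟩ := hP
  have hswap : ∀ x, r ((Equiv.swap s t) x) = r x := by
    intro x
    rcases eq_or_ne x s with rfl | hxs
    · rw [Equiv.swap_apply_left]; exact hr.symm
    rcases eq_or_ne x t with rfl | hxt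
    · rw [Equiv.swap_apply_right]; exact hr
    · rw [Equiv.swap_apply_of_ne_of_ne hxs hxt]
  constructor
  · intro a b hab
    simp only [Equiv.trans_apply]
    exact hext _ _ (by rwa [hswap, hswap])
  · intro u hu hut
    simp only [Equiv.trans_apply, Equiv.swap_apply_right]
    rcases eq_or_ne s t with rfl | hst
    · rcases eq_or_ne u s with rfl | hus
      · exact absurd rfl hut
      · rw [Equiv.swap_apply_of_ne_of_ne hus hut]
        exact hmin u hu hut
    rcases eq_or_ne u s with rfl | hus
    · rw [Equiv.swap_apply_left]
      exact hmin t ht (Ne.symm hst)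
    · rw [Equiv.swap_apply_of_ne_of_ne hus hut]
      exact hmin u hu hus

lemma gset_card {n : ℕ} (r : Fin n → ℕ) (S : Finset (Fin n)) (s t : Fin n)
    (hs : s ∈ S) (ht : t ∈ S) (hr : r s = r t) :
    (gset r S s).card = (gset r S t).card := by
  classical
  refine Finset.card_bij' (fun P _ => (Equiv.swap s t).trans P)
    (fun P _ => (Equiv.swap s t).trans P)
    (fun P hP => gset_map r S s t hs ht hr hP)
    (fun P hP => by simpa [Equiv.swap_comm s t] using gset_map r S t s ht hs hr.symm hP) ?_ ?_
  · intro P _; ext x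
    simp [Equiv.trans_apply, Equiv.swap_apply_self]
  · intro P _; ext x
    simp [Equiv.trans_apply, Equiv.swap_apply_self]

lemma ext_card_eq {n : ℕ} (r : Fin n → ℕ) (S : Finset (Fin n)) (hS : S.Nonempty)
    (hrS : ∀ a ∈ S, ∀ b ∈ S, r a = r b) :
    (Finset.univ.filter fun Q : Pref n => IsExt r Q) = S.biUnion (gset r S) := by
  classical
  apply Finset.Subset.antisymm
  · intro P hP
    simp only [mem_filter, mem_univ, true_and] at hP
    obtain ⟨s, hsS, hsmin⟩ := S.exists_min_image P hS
    refine Finset.mem_biUnion.mpr ⟨s, hsS, ?_⟩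
    simp only [gset, mem_filter, mem_univ, true_and]
    refine ⟨hP, fun t htS hts => ?_⟩
    exact lt_of_le_of_ne (hsmin t htS) (fun h => hts (P.injective h.symm))
  · intro P hP
    obtain ⟨s, _, hPs⟩ := Finset.mem_biUnion.mp hP
    simp only [gset, mem_filter, mem_univ, true_and] at hPs ⊢
    exact hPs.1

lemma key {n : ℕ} (r : Fin n → ℕ) (L : Fin n) (A : Finset (Fin n)) (hL : L ∉ A)
    (hA : ∀ m ∈ A, r m = r L) :
    (∑ P : Pref n, if (∀ m ∈ A, P L < P m) then unifExt r P else 0)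
      = ((A.card : ℝ) + 1)⁻¹ := by
  classical
  set S : Finset (Fin n) := insert L A with hSdef
  have hLS : L ∈ S := Finset.mem_insert_self _ _
  have hrS : ∀ a ∈ S, ∀ b ∈ S, r a = r b := by
    intro a ha b hb
    have h1 : ∀ x ∈ S, r x = r L := by
      intro x hx
      rcases Finset.mem_insert.mp hx with rfl | hx
      · rfl
      · exact hA x hx
    rw [h1 a ha, h1 b hb]
  set E : Finset (Pref n) := Finset.univ.filter fun Q : Pref n => IsExt r Q with hEdef
  -- disjointness of gsets
  have hdisj : (S : Set (Fin n)).PairwiseDisjoint (gset r S) := by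
    intro s hs t ht hst
    simp only [Finset.disjoint_left]
    intro P hPs hPt
    simp only [gset, mem_filter, mem_univ, true_and] at hPs hPt
    exact absurd (hPt.2 s (by exact_mod_cast hs) hst) (not_lt.mpr (le_of_lt (hPs.2 t (by exact_mod_cast ht) (Ne.symm hst))))
  have hEcard : E.card = S.card * (gset r S L).card := by
    rw [hEdef, ext_card_eq r S ⟨L, hLS⟩ hrS, Finset.card_biUnion hdisj]
    rw [Finset.sum_congr rfl (fun s hs => gset_card r S s L hs hLS (hrS s hs L hLS))]
    rw [Finset.sum_const, smul_eq_mul]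
  have hgpos : 0 < (gset r S L).card := by
    obtain ⟨P, hP⟩ := ext_exists r
    have hEne : 0 < E.card := Finset.card_pos.mpr ⟨P, by simp [hEdef, hP]⟩
    rw [hEcard] at hEne
    rcases Nat.eq_zero_or_pos (gset r S L).card with h0 | h0
    · rw [h0, Nat.mul_zero] at hEne; exact absurd hEne (lt_irrefl 0)
    · exact h0
  have hgeq : gset r S L
      = Finset.univ.filter (fun P : Pref n => IsExt r P ∧ ∀ m ∈ A, P L < P m) := by
    ext P
    simp only [gset, mem_filter, mem_univ, true_and, hSdef, Finset.mem_insert]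
    constructor
    · rintro ⟨h1, h2⟩
      exact ⟨h1, fun m hm => h2 m (Or.inr hm) (fun h => hL (h ▸ hm))⟩
    · rintro ⟨h1, h2⟩
      refine ⟨h1, ?_⟩
      rintro t (rfl | ht) htL
      · exact absurd rfl htL
      · exact h2 t ht
  have hsum : (∑ P : Pref n, if (∀ m ∈ A, P L < P m) then unifExt r P else 0)
      = ((gset r S L).card : ℝ) * ((E.card : ℝ))⁻¹ := by
    have step : ∀ P : Pref n,
        (if (∀ m ∈ A, P L < P m) then unifExt r P else 0)
          = if (IsExt r P ∧ ∀ m ∈ A, P L < P m) then ((E.card : ℝ))⁻¹ else 0 := by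
      intro P
      by_cases h1 : IsExt r P <;> by_cases h2 : (∀ m ∈ A, P L < P m) <;>
        simp [unifExt, h1, h2, hEdef]
    rw [Finset.sum_congr rfl (fun P _ => step P), ← Finset.sum_filter, Finset.sum_const,
      ← hgeq, nsmul_eq_mul]
  rw [hsum, hEcard, hSdef, Finset.card_insert_of_notMem hL]
  have hg0 : ((gset r S L).card : ℝ) ≠ 0 := Nat.cast_ne_zero.mpr hgpos.ne'
  push_cast
  field_simp
  exact mul_inv_cancel₀ hg0

/-- compact indifference model with certain men. `r w` is woman `w`'s
weak order over the men (equal values = same tie), and her realized strict order is a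
uniformly random linear extension, independently across women. Let `k w` count the men
`m ≠ μ(w)` with `w ≻_m μ(m)` that lie in the same tie as `μ(w)` in `w`'s weak order.
If no man `m` with `w ≻_m μ(m)` is strictly preferred by `w` to `μ(w)`, then the
probability that `w` is in no blocking pair is `1/(k w + 1)`, and the stability
probability of `μ` is `∏ w, 1/(k w + 1)`. -/
theorem statement4 {n : ℕ} (PM : Fin n → Pref n) (r : Fin n → Fin n → ℕ)
    (μ : Equiv.Perm (Fin n))
    (k : Fin n → ℕ)
    (hk : ∀ w, k w = (Finset.univ.filter fun m =>
      μ m ≠ w ∧ PM m w < PM m (μ m) ∧ r w m = r w (μ.symm w)).card)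
    (hyp : ∀ w m, PM m w < PM m (μ m) → ¬ r w m < r w (μ.symm w)) :
    (∀ w : Fin n,
      (∑ P : Pref n,
        if (∀ m, ¬ (μ m ≠ w ∧ PM m w < PM m (μ m) ∧ P m < P (μ.symm w)))
        then unifExt (r w) P else 0) = ((k w : ℝ) + 1)⁻¹) ∧
    stabProbW PM (fun w => unifExt (r w)) μ = ∏ w, ((k w : ℝ) + 1)⁻¹ := by
  classical
  have part1 : ∀ w : Fin n,
      (∑ P : Pref n,
        if (∀ m, ¬ (μ m ≠ w ∧ PM m w < PM m (μ m) ∧ P m < P (μ.symm w)))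
        then unifExt (r w) P else 0) = ((k w : ℝ) + 1)⁻¹ := by
    intro w
    set L := μ.symm w with hLdef
    have hμL : μ L = w := μ.apply_symm_apply w
    set A : Finset (Fin n) := Finset.univ.filter
      (fun m => μ m ≠ w ∧ PM m w < PM m (μ m) ∧ r w m = r w L) with hAdef
    have hLA : L ∉ A := by
      simp only [hAdef, mem_filter, mem_univ, true_and, not_and]
      intro h; exact absurd hμL h
    have hAr : ∀ m ∈ A, r w m = r w L := by
      intro m hm
      simp only [hAdef, mem_filter, mem_univ, true_and] at hm
      exact hm.2.2
    have hiff : ∀ P : Pref n, IsExt (r w) P →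
        ((∀ m, ¬ (μ m ≠ w ∧ PM m w < PM m (μ m) ∧ P m < P L)) ↔ (∀ m ∈ A, P L < P m)) := by
      intro P hP
      constructor
      · intro hC m hm
        simp only [hAdef, mem_filter, mem_univ, true_and] at hm
        have h1 := hC m
        have h2 : ¬ P m < P L := fun h => h1 ⟨hm.1, hm.2.1, h⟩
        have hmL : m ≠ L := fun h => hm.1 (h ▸ hμL)
        exact lt_of_le_of_ne (le_of_not_gt h2) (fun h => hmL (P.injective h.symm))
      · rintro hmin m ⟨h1, h2, h3⟩
        have hnr := hyp w m h2
        rcases eq_or_ne (r w m) (r w L) with heq | hne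
        · have hmA : m ∈ A := by
            simp only [hAdef, mem_filter, mem_univ, true_and]
            exact ⟨h1, h2, heq⟩
          exact absurd h3 (not_lt.mpr (le_of_lt (hmin m hmA)))
        · have : r w L < r w m := lt_of_le_of_ne (le_of_not_gt hnr) (Ne.symm hne)
          exact absurd h3 (not_lt.mpr (le_of_lt (hP L m this)))
    have hstep : ∀ P : Pref n,
        (if (∀ m, ¬ (μ m ≠ w ∧ PM m w < PM m (μ m) ∧ P m < P L))
          then unifExt (r w) P else 0)
          = (if (∀ m ∈ A, P L < P m) then unifExt (r w) P else 0) := by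
      intro P
      by_cases hP : IsExt (r w) P
      · rw [if_congr (hiff P hP) rfl rfl]
      · have h0 : unifExt (r w) P = 0 := by simp [unifExt, hP]
        rw [h0, ite_self, ite_self]
    rw [Finset.sum_congr rfl (fun P _ => hstep P), key (r w) L A hLA hAr, hk w]
  refine ⟨part1, ?_⟩
  have hrhs : (∏ w, ((k w : ℝ) + 1)⁻¹)
      = ∏ w, ∑ Q : Pref n,
        (if (∀ m, ¬ (μ m ≠ w ∧ PM m w < PM m (μ m) ∧ Q m < Q (μ.symm w)))
          then unifExt (r w) Q else 0) :=
    Finset.prod_congr rfl (fun w _ => (part1 w).symm)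
  rw [hrhs, Fintype.prod_sum]
  unfold stabProbW
  apply Finset.sum_congr rfl
  intro PW _
  by_cases hst : stable μ PM PW
  · rw [if_pos hst]
    refine Finset.prod_congr rfl (fun w _ => ?_)
    rw [if_pos]
    intro m hm
    exact hst m w ⟨hm.1, hm.2.1, hm.2.2⟩
  · rw [if_neg hst]
    simp only [stable, not_forall, not_not] at hst
    obtain ⟨m, w, hb⟩ := hst
    refine (Finset.prod_eq_zero (Finset.mem_univ w) ?_).symm
    rw [if_neg]
    intro hC
    exact hC m ⟨hb.1, hb.2.1, hb.2.2⟩
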